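/- For every ρ > 1, the limit as α → 1 of c_α^{(∞)}(ρ) := (1/(α−1))·log(1 + (1 + α(ρ−1) − ρ^α)/((1−α)(ρ−1))) − (α/(α−1))·log(1 + (1 + α(ρ−1) − ρ^α)/((1−α)(ρ^α−1))) exists and equals (ρ·log ρ)/(ρ−1) − log(e·ρ·log ρ/(ρ−1)). -/

import Mathlib

open Finset

/-- `P` is a probability mass function, strictly positive on `{1,…,n}`. -/
def IsPMF (n : ℕ) (P : ℕ → ℝ) : Prop :=
  (∀ i ∈ Finset.Icc 1 n, 0 < P i) ∧ ∑ i ∈ Finset.Icc 1 n, P i = 1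

/-- The ratio of the maximal to minimal mass of `P` on `{1,…,n}` is at most `ρ`. -/
def RatioBdd (n : ℕ) (ρ : ℝ) (P : ℕ → ℝ) : Prop :=
  ∀ i ∈ Finset.Icc 1 n, ∀ j ∈ Finset.Icc 1 n, P i ≤ ρ * P j

/-- `P` is nonincreasing on `{1,…,n}`. -/
def DecOn (n : ℕ) (P : ℕ → ℝ) : Prop :=
  ∀ i ∈ Finset.Icc 1 n, ∀ j ∈ Finset.Icc 1 n, i ≤ j → P j ≤ P i

/-- Sum of the `k` largest masses of `P` on `{1,…,n}`. -/
noncomputable def topSum (n : ℕ) (P : ℕ → ℝ) (k : ℕ) : ℝ :=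
  sSup ((fun s : Finset ℕ => ∑ i ∈ s, P i) '' {s | s ⊆ Finset.Icc 1 n ∧ s.card = k})

/-- `P ≺ Q`: `P` is majorized by `Q`, both viewed on `{1,…,n}`. -/
def MajorizedBy (n : ℕ) (P Q : ℕ → ℝ) : Prop :=
  ∀ k, 1 ≤ k → k ≤ n - 1 → topSum n P k ≤ topSum n Q k

/-- Zero-padding of a pmf on `{1,…,m}` outside of `{1,…,m}`. -/
def padTo (m : ℕ) (Q : ℕ → ℝ) : ℕ → ℝ := fun i => if i ≤ m then Q i else 0

/-- Rényi entropy of order `α` of `P` on `{1,…,n}` (Shannon entropy for `α = 1`);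
natural logarithms. -/
noncomputable def renyiH (n : ℕ) (α : ℝ) (P : ℕ → ℝ) : ℝ :=
  if α = 1 then -∑ i ∈ Finset.Icc 1 n, P i * Real.log (P i)
  else (1 - α)⁻¹ * Real.log (∑ i ∈ Finset.Icc 1 n, P i ^ α)

/-- `c_α^{(n)}(ρ) = log n − min_{P ∈ 𝒫_n(ρ)} H_α(P)` for `n ≥ 2`, and `0` for `n ≤ 1`. -/
noncomputable def cN (α ρ : ℝ) (n : ℕ) : ℝ :=
  if n ≤ 1 then 0
  else Real.log n - sInf (renyiH n α '' {P | IsPMF n P ∧ RatioBdd n ρ P})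

/-- The closed-form expression for `c_α^{(∞)}(ρ)`, `α ∈ (0,1) ∪ (1,∞)`. -/
noncomputable def cInfinity (α ρ : ℝ) : ℝ :=
  (α - 1)⁻¹ * Real.log (1 + (1 + α * (ρ - 1) - ρ ^ α) / ((1 - α) * (ρ - 1)))
    - α / (α - 1) * Real.log (1 + (1 + α * (ρ - 1) - ρ ^ α) / ((1 - α) * (ρ ^ α - 1)))

/-- `v(α) := c_α^{(∞)}(2)`, with the continuous extension at `α = 1`. -/
noncomputable def vFun (α : ℝ) : ℝ :=
  if α = 1 then Real.log (2 / (Real.exp 1 * Real.log 2))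
  else Real.log ((α - 1) / ((2 : ℝ) ^ α - 2)) - α / (α - 1) * Real.log (α / ((2 : ℝ) ^ α - 1))

/-- `n*`: the maximal `i ∈ {1,…,m−1}` with `P i ≥ (m−i)⁻¹ ∑_{j=i+1}^n P j`. -/
noncomputable def nStar (n m : ℕ) (P : ℕ → ℝ) : ℕ :=
  sSup {i : ℕ | 1 ≤ i ∧ i ≤ m - 1 ∧
    ((m : ℝ) - (i : ℝ))⁻¹ * ∑ j ∈ Finset.Icc (i + 1) n, P j ≤ P i}

/-- The pmf of `X̃_m` on `{1,…,m}`, built from a nonincreasing pmf `P` on `{1,…,n}`. -/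
noncomputable def tildeX (n m : ℕ) (P : ℕ → ℝ) : ℕ → ℝ := fun i =>
  if P 1 < 1 / (m : ℝ) then 1 / (m : ℝ)
  else if i ≤ nStar n m P then P i
  else ((m : ℝ) - (nStar n m P : ℝ))⁻¹ * ∑ j ∈ Finset.Icc (nStar n m P + 1) n, P j

/-- The pmf of `Ỹ_m` on `{1,…,m}`. -/
def tildeY (n m : ℕ) (P : ℕ → ℝ) : ℕ → ℝ := fun i =>
  if i = 1 then ∑ j ∈ Finset.Icc 1 (n - m + 1), P j else P (n - m + i)

/-- The pmf of `f(X)`: `(push n f P) j = ∑_{i ∈ {1,…,n}, f i = j} P i`. -/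
def push (n : ℕ) (f : ℕ → ℕ) (P : ℕ → ℝ) : ℕ → ℝ := fun j =>
  ∑ i ∈ (Finset.Icc 1 n).filter (fun i => f i = j), P i

/-- The set `{1,…,n}^k` of source sequences of length `k`. -/
def seqSet (n k : ℕ) : Finset (Fin k → ℕ) := Fintype.piFinset fun _ => Finset.Icc 1 n

/-- Product (i.i.d.) probability of a sequence. -/
def prodP (k : ℕ) (P : ℕ → ℝ) (x : Fin k → ℕ) : ℝ := ∏ i, P (x i)

/-- `g` is a ranking function for the i.i.d. vector on `{1,…,n}^k` with marginal `P`: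
a bijection onto `{1,…,n^k}` which assigns smaller ranks to larger masses. -/
def IsRanking (n k : ℕ) (P : ℕ → ℝ) (g : (Fin k → ℕ) → ℕ) : Prop :=
  Set.BijOn g (↑(seqSet n k)) (Set.Icc 1 (n ^ k)) ∧
    ∀ x ∈ seqSet n k, ∀ y ∈ seqSet n k, prodP k P y < prodP k P x → g x < g y

/-- The `ρ`-th guessing moment `E[g(Z^k)^ρ]`. -/
noncomputable def gmoment (n k : ℕ) (P : ℕ → ℝ) (g : (Fin k → ℕ) → ℕ) (ρ : ℝ) : ℝ :=
  ∑ x ∈ seqSet n k, prodP k P x * (g x : ℝ) ^ ρ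

/-- Kraft inequality for a `D`-ary length function on `{1,…,n}^k`. -/
def Kraft (n k D : ℕ) (ℓ : (Fin k → ℕ) → ℕ) : Prop :=
  ∑ x ∈ seqSet n k, (D : ℝ) ^ (-(ℓ x : ℝ)) ≤ 1

/-- Scaled cumulant generating function `Λ_k(ρ)` of the codeword lengths (base-`D` log). -/
noncomputable def cgf (n k D : ℕ) (P : ℕ → ℝ) (ℓ : (Fin k → ℕ) → ℕ) (ρ : ℝ) : ℝ :=
  (1 / (k : ℝ)) * Real.logb D (∑ x ∈ seqSet n k, prodP k P x * (D : ℝ) ^ (ρ * (ℓ x : ℝ)))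

/-- `i_β` of Lemma 2. -/
noncomputable def iBeta (n : ℕ) (ρ β : ℝ) : ℕ := Nat.floor ((1 - (n : ℝ) * β) / ((ρ - 1) * β))

/-- The pmf `Q_β` of Lemma 2. -/
noncomputable def Qbeta (n : ℕ) (ρ β : ℝ) : ℕ → ℝ := fun j =>
  if j ≤ iBeta n ρ β then ρ * β
  else if j = iBeta n ρ β + 1 then
    1 - ((n : ℝ) + (iBeta n ρ β : ℝ) * ρ - (iBeta n ρ β : ℝ) - 1) * β
  else β

theorem stmt5 (ρ : ℝ) (hρ : 1 < ρ) :
    Filter.Tendsto (fun α : ℝ => cInfinity α ρ) (nhdsWithin 1 {α : ℝ | α ≠ 1})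
      (nhds (ρ * Real.log ρ / (ρ - 1) -
        Real.log (Real.exp 1 * ρ * Real.log ρ / (ρ - 1)))) := by
  have hρ0 : (0:ℝ) < ρ := lt_trans one_pos hρ
  have hρ1' : (0:ℝ) < ρ - 1 := by linarith
  have hρ1 : ρ - 1 ≠ 0 := hρ1'.ne'
  have hlρ : 0 < Real.log ρ := Real.log_pos hρ
  have hL : 0 < ρ * Real.log ρ / (ρ - 1) := by positivity
  -- derivative of ρ^α at 1
  have hf : HasDerivAt (fun α : ℝ => ρ ^ α) (ρ * Real.log ρ) 1 := by
    simpa [Real.rpow_one] using (Real.hasStrictDerivAt_const_rpow hρ0 1).hasDerivAt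
  -- limit of s α := (ρ^α - ρ)/(α - 1)
  have hs : Filter.Tendsto (fun α : ℝ => (ρ ^ α - ρ)/(α - 1)) (nhdsWithin 1 {α : ℝ | α ≠ 1})
      (nhds (ρ * Real.log ρ)) := by
    have := hasDerivAt_iff_tendsto_slope.mp hf
    refine this.congr (fun α => ?_)
    simp only [slope_def_field, Real.rpow_one]
  -- slope limit for G
  have hGslope : Filter.Tendsto (fun α : ℝ => (α - 1)⁻¹ * Real.log ((ρ ^ α - 1)/(α * (ρ - 1))))
      (nhdsWithin 1 {α : ℝ | α ≠ 1}) (nhds (ρ * Real.log ρ / (ρ - 1) - 1)) := by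
    have h1 : HasDerivAt (fun α : ℝ => ρ ^ α - 1) (ρ * Real.log ρ) 1 := hf.sub_const 1
    have h2 : HasDerivAt (fun α : ℝ => α * (ρ - 1)) (ρ - 1) 1 := by
      simpa using (hasDerivAt_id (1:ℝ)).mul_const (ρ - 1)
    have hden : (1:ℝ) * (ρ - 1) ≠ 0 := by simpa using hρ1
    have h3 := h1.div h2 hden
    have hval : (ρ ^ (1:ℝ) - 1) / ((1:ℝ) * (ρ - 1)) = 1 := by
      rw [Real.rpow_one]; field_simp
    have hG : HasDerivAt (fun α : ℝ => Real.log ((ρ ^ α - 1)/(α * (ρ - 1))))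
        (ρ * Real.log ρ / (ρ - 1) - 1) 1 := by
      have hne : (ρ ^ (1:ℝ) - 1) / ((1:ℝ) * (ρ - 1)) ≠ 0 := by rw [hval]; norm_num
      have := h3.log hne
      convert this using 1
      · rfl
      simp only [Pi.div_apply]
      rw [hval, Real.rpow_one]
      field_simp
    have := hasDerivAt_iff_tendsto_slope.mp hG
    refine this.congr (fun α => ?_)
    have hG1 : Real.log ((ρ ^ (1:ℝ) - 1)/((1:ℝ) * (ρ - 1))) = 0 := by
      rw [hval]; exact Real.log_one
    simp only [slope_def_field]
    rw [hG1, sub_zero, div_eq_inv_mul]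
  -- limit of w α := α * s α / (ρ^α - 1)
  have hw : Filter.Tendsto (fun α : ℝ => α * ((ρ ^ α - ρ)/(α - 1)) / (ρ ^ α - 1))
      (nhdsWithin 1 {α : ℝ | α ≠ 1}) (nhds (ρ * Real.log ρ / (ρ - 1))) := by
    have hid : Filter.Tendsto (fun α : ℝ => α) (nhdsWithin 1 {α : ℝ | α ≠ 1}) (nhds 1) :=
      Filter.tendsto_id.mono_left nhdsWithin_le_nhds
    have hcont : Filter.Tendsto (fun α : ℝ => ρ ^ α - 1) (nhdsWithin 1 {α : ℝ | α ≠ 1})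
        (nhds (ρ - 1)) := by
      have := (hf.continuousAt.tendsto).mono_left
        (nhdsWithin_le_nhds (s := {α : ℝ | α ≠ 1}))
      rw [Real.rpow_one] at this
      exact this.sub_const 1
    have h := (hid.mul hs).div hcont hρ1
    have h2 : Filter.Tendsto (fun α : ℝ => α * ((ρ ^ α - ρ)/(α - 1)) / (ρ ^ α - 1))
        (nhdsWithin 1 {α : ℝ | α ≠ 1}) (nhds (1 * (ρ * Real.log ρ) / (ρ - 1))) := h
    simpa using h2
  have hlogw : Filter.Tendsto (fun α : ℝ => Real.log (α * ((ρ ^ α - ρ)/(α - 1)) / (ρ ^ α - 1)))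
      (nhdsWithin 1 {α : ℝ | α ≠ 1}) (nhds (Real.log (ρ * Real.log ρ / (ρ - 1)))) :=
    (Real.continuousAt_log hL.ne').tendsto.comp hw
  -- value identity
  have hval2 : ρ * Real.log ρ / (ρ - 1) - Real.log (Real.exp 1 * ρ * Real.log ρ / (ρ - 1))
      = (ρ * Real.log ρ / (ρ - 1) - 1) - Real.log (ρ * Real.log ρ / (ρ - 1)) := by
    have : Real.exp 1 * ρ * Real.log ρ / (ρ - 1)
        = Real.exp 1 * (ρ * Real.log ρ / (ρ - 1)) := by ring
    rw [this, Real.log_mul (Real.exp_ne_zero 1) hL.ne', Real.log_exp]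
    ring
  rw [hval2]
  refine Filter.Tendsto.congr' ?_ (hGslope.sub hlogw)
  -- eventual equality
  have hpos : ∀ᶠ α : ℝ in nhdsWithin 1 {α : ℝ | α ≠ 1}, 0 < α :=
    eventually_nhdsWithin_of_eventually_nhds (eventually_gt_nhds one_pos)
  have hne1 : ∀ᶠ α : ℝ in nhdsWithin 1 {α : ℝ | α ≠ 1}, α ≠ 1 :=
    eventually_mem_nhdsWithin
  filter_upwards [hpos, hne1] with α hα0 hα1
  have hαne : α - 1 ≠ 0 := sub_ne_zero.mpr hα1
  have h1α : 1 - α ≠ 0 := fun h => hα1 (by linarith [sub_eq_zero.mp h])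
  have hx1 : 0 < ρ ^ α - 1 := by
    have : (1:ℝ) < ρ ^ α := Real.one_lt_rpow_iff_of_pos hρ0 |>.mpr (Or.inl ⟨hρ, hα0⟩)
    linarith
  have hs0 : 0 < (ρ ^ α - ρ)/(α - 1) := by
    rcases lt_or_gt_of_ne hα1 with h | h
    · have : ρ ^ α < ρ := by
        nth_rewrite 2 [← Real.rpow_one ρ]
        exact Real.rpow_lt_rpow_left_iff hρ |>.mpr h
      exact div_pos_of_neg_of_neg (by linarith) (by linarith)
    · have : ρ < ρ ^ α := by
        nth_rewrite 1 [← Real.rpow_one ρ]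
        exact Real.rpow_lt_rpow_left_iff hρ |>.mpr h
      exact div_pos (by linarith) (by linarith)
  have hxρ1 : ρ ^ α - 1 ≠ 0 := hx1.ne'
  -- rewrite the two logarithm arguments
  have e1 : 1 + (1 + α * (ρ - 1) - ρ ^ α) / ((1 - α) * (ρ - 1))
      = ((ρ ^ α - ρ)/(α - 1))/(ρ - 1) := by
    field_simp
    ring
  have e2 : 1 + (1 + α * (ρ - 1) - ρ ^ α) / ((1 - α) * (ρ ^ α - 1))
      = α * ((ρ ^ α - ρ)/(α - 1))/(ρ ^ α - 1) := by
    field_simp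
    ring
  show (α - 1)⁻¹ * Real.log ((ρ ^ α - 1)/(α * (ρ - 1)))
      - Real.log (α * ((ρ ^ α - ρ)/(α - 1)) / (ρ ^ α - 1)) = cInfinity α ρ
  rw [cInfinity, e1, e2]
  have hsne : (ρ ^ α - ρ)/(α - 1) ≠ 0 := hs0.ne'
  rw [Real.log_div hsne hρ1,
    Real.log_div (mul_ne_zero hα0.ne' hsne) hxρ1,
    Real.log_mul hα0.ne' hsne,
    Real.log_div hxρ1 (mul_ne_zero hα0.ne' hρ1),
    Real.log_mul hα0.ne' hρ1]
  field_simp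
  ring
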